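/- Let d ≥ 3 be an odd integer, let r ≤ d−2 be an integer with gcd(r,d)=1, and let n be a positive integer with n ≡ −r (mod d) and n ≥ d−r. Then, as rational functions in the two variables a and q over ℚ, ∑_{k=0}^{n−1} [ ∏_{i=1}^{(d−1)/2} (a^{d+1−2i} q^r; q^d)_k (a^{2i−d−1} q^r; q^d)_k ] · (q^r;q^d)_k · q^{dk} / ( [ ∏_{i=1}^{(d−1)/2} (a^{d−2i} q^d; q^d)_k (a^{2i−d} q^d; q^d)_k ] · (q^d;q^d)_k ) ≡ 0 (mod (1 − a q^n)(a − q^n)). (Here the numerator parameters are a^{d−1}q^r, a^{d−3}q^r, …, a^2 q^r, their reciprocals-in-a counterparts a^{1−d}q^r, …, a^{−2}q^r, and q^r; the denominator parameters are a^{d−2}q^d, …, a q^d, a^{2−d}q^d, …, a^{−1}q^d, and q^d.) -/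

import Mathlib

open Finset

/-- Polynomials in the two variables `a` (index 0) and `q` (index 1) over `ℚ`. -/
abbrev MvP : Type := MvPolynomial (Fin 2) ℚ

/-- The field of rational functions in the two variables `a` and `q` over `ℚ`. -/
abbrev FF : Type := FractionRing MvP

/-- The variable `a`, viewed in the field of rational functions. -/
noncomputable def av : FF := algebraMap MvP FF (MvPolynomial.X 0)

/-- The variable `q`, viewed in the field of rational functions. -/
noncomputable def qv : FF := algebraMap MvP FF (MvPolynomial.X 1)

/-- The q-shifted factorial `(x; q)_k = ∏_{j=0}^{k-1} (1 - x q^j)`. -/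
noncomputable def poch (x q : FF) (k : ℕ) : FF :=
  ∏ j ∈ Finset.range k, (1 - x * q ^ j)

/-- `A ≡ 0 (mod P)`: `A = P · (B / C)` where the denominator `C` is coprime
(has no common non-unit factor) with `P`. -/
def CongrZero (A : FF) (P : MvP) : Prop :=
  ∃ B C : MvP, C ≠ 0 ∧ IsRelPrime C P ∧
    A = algebraMap MvP FF P * (algebraMap MvP FF B / algebraMap MvP FF C)



noncomputable def pochK {K : Type*} [Field K] (x q : K) (k : ℕ) : K :=
  ∏ j ∈ Finset.range k, (1 - x * q ^ j)

section KM
variable {K : Type*} [Field K]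

lemma pochK_succ (x q : K) (k : ℕ) :
    pochK x q (k+1) = pochK x q k * (1 - x * q ^ k) :=
  Finset.prod_range_succ _ _

lemma pochK_succ' (x q : K) (k : ℕ) :
    pochK x q (k+1) = (1 - x) * pochK (x * q) q k := by
  rw [pochK, Finset.prod_range_succ' (fun j => (1 - x * q ^ j)) k]
  rw [mul_comm]
  congr 1
  · simp
  · exact Finset.prod_congr rfl fun j _ => by rw [pow_succ']; ring

lemma pochK_shift (b q : K) (μ k : ℕ) :
    pochK (b * q ^ μ) q k * ∏ j ∈ range μ, (1 - b * q ^ j)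
      = pochK b q k * ∏ j ∈ range μ, (1 - b * q ^ j * q ^ k) := by
  have h1 : (∏ j ∈ range μ, (1 - b * q ^ j)) * pochK (b * q ^ μ) q k
      = ∏ j ∈ range (μ + k), (1 - b * q ^ j) := by
    rw [Finset.prod_range_add (fun j => (1 - b * q ^ j)) μ k]
    congr 1
    exact (Finset.prod_congr rfl fun j _ => by rw [pow_add]; ring).symm
  have h2 : pochK b q k * ∏ j ∈ range μ, (1 - b * q ^ j * q ^ k)
      = ∏ j ∈ range (k + μ), (1 - b * q ^ j) := by
    rw [Finset.prod_range_add (fun j => (1 - b * q ^ j)) k μ]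
    congr 1
    exact (Finset.prod_congr rfl fun j _ => by rw [pow_add]; ring).symm
  rw [mul_comm (pochK (b * q ^ μ) q k), h1, h2, add_comm]

variable (Q : K) (hQ0 : Q ≠ 0) (hQ1 : ∀ t : ℕ, t ≠ 0 → Q ^ t ≠ 1)

include hQ1 in
lemma pochQQ_ne (k : ℕ) : pochK Q Q k ≠ 0 := by
  refine Finset.prod_ne_zero_iff.2 fun j _ => ?_
  rw [sub_ne_zero]
  intro h
  exact hQ1 (j+1) (Nat.succ_ne_zero j) (by rw [pow_succ']; exact h.symm)

include hQ0 in
lemma pascal (m k : ℕ) :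
    pochK (Q ^ (-(m:ℤ)-1)) Q k
      = pochK (Q ^ (-(m:ℤ))) Q k
        - Q ^ (-(m:ℤ)-1) * (1 - Q ^ k) * pochK (Q ^ (-(m:ℤ))) Q (k-1) := by
  cases k with
  | zero => simp [pochK]
  | succ k =>
    have hQk : (Q : K) ^ k = Q ^ (k : ℤ) := (zpow_natCast Q k).symm
    have hmul : Q ^ (-(m:ℤ)-1) * Q = Q ^ (-(m:ℤ)) := by
      rw [← zpow_add_one₀ hQ0, sub_add_cancel]
    have hL : pochK (Q ^ (-(m:ℤ)-1)) Q (k+1)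
        = (1 - Q ^ (-(m:ℤ)-1)) * pochK (Q ^ (-(m:ℤ))) Q k := by
      rw [pochK_succ', hmul]
    have hR : pochK (Q ^ (-(m:ℤ))) Q (k+1)
        = pochK (Q ^ (-(m:ℤ))) Q k * (1 - Q ^ (-(m:ℤ)) * Q ^ k) := pochK_succ _ _ _
    rw [hL, hR]
    have e1 : Q ^ (-(m:ℤ)) * Q ^ k = Q ^ (-(m:ℤ)-1) * Q ^ (k+1) := by
      rw [hQk, ← zpow_natCast Q (k+1), ← zpow_add₀ hQ0, ← zpow_add₀ hQ0]
      congr 1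
      push_cast
      ring
    simp only [Nat.add_sub_cancel]
    linear_combination (pochK (Q ^ (-(m:ℤ))) Q k) * e1

include hQ0 hQ1 in
lemma qbinom (m : ℕ) (z : K) :
    ∑ k ∈ range (m+1), pochK (Q ^ (-(m:ℤ))) Q k / pochK Q Q k * z ^ k
      = ∏ i ∈ range m, (1 - z * Q ^ (-(i:ℤ)-1)) := by
  induction m generalizing z with
  | zero => simp [pochK]
  | succ m ih =>
    have hvan : pochK (Q ^ (-(m:ℤ))) Q (m+1) = 0 := by
      refine Finset.prod_eq_zero (Finset.self_mem_range_succ m) ?_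
      rw [← zpow_natCast Q m, ← zpow_add₀ hQ0]
      simp
    have hcast : (-(↑(m+1):ℤ)) = -(m:ℤ)-1 := by push_cast; ring
    have hsplit : ∀ k ∈ range (m+2),
        pochK (Q ^ (-(↑(m+1):ℤ))) Q k / pochK Q Q k * z ^ k
          = pochK (Q ^ (-(m:ℤ))) Q k / pochK Q Q k * z ^ k
            - Q ^ (-(m:ℤ)-1) * (1 - Q ^ k) * pochK (Q ^ (-(m:ℤ))) Q (k-1)
                / pochK Q Q k * z ^ k := by
      intro k _
      rw [hcast, pascal Q hQ0 m k, sub_div, sub_mul]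
    rw [Finset.sum_congr rfl hsplit, Finset.sum_sub_distrib]
    have hA : ∑ k ∈ range (m+2), pochK (Q ^ (-(m:ℤ))) Q k / pochK Q Q k * z ^ k
        = ∏ i ∈ range m, (1 - z * Q ^ (-(i:ℤ)-1)) := by
      rw [Finset.sum_range_succ, hvan, ← ih z]
      simp
    have hB : ∑ k ∈ range (m+2),
        Q ^ (-(m:ℤ)-1) * (1 - Q ^ k) * pochK (Q ^ (-(m:ℤ))) Q (k-1)
          / pochK Q Q k * z ^ k
        = Q ^ (-(m:ℤ)-1) * z * ∏ i ∈ range m, (1 - z * Q ^ (-(i:ℤ)-1)) := by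
      rw [Finset.sum_range_succ' (fun k => Q ^ (-(m:ℤ)-1) * (1 - Q ^ k) * pochK (Q ^ (-(m:ℤ))) Q (k-1)
          / pochK Q Q k * z ^ k) (m+1)]
      simp only [pow_zero, sub_self, mul_zero, zero_mul, zero_div, add_zero,
        Nat.add_sub_cancel]
      rw [← ih z, Finset.mul_sum]
      refine Finset.sum_congr rfl fun k _ => ?_
      have h1 : pochK Q Q (k+1) = pochK Q Q k * (1 - Q ^ (k+1)) := by
        rw [pochK_succ]
        congr 2
        rw [pow_succ']
      have h2 : (1 - Q ^ (k+1)) ≠ 0 := by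
        rw [sub_ne_zero]
        exact fun h => hQ1 (k+1) (Nat.succ_ne_zero k) h.symm
      have h3 : pochK Q Q k ≠ 0 := pochQQ_ne Q hQ1 k
      field_simp [h1]
      rw [h1]
      ring
    rw [hA, hB, Finset.prod_range_succ]
    ring

include hQ0 hQ1 in
lemma base_sum (m s : ℕ) (hs1 : 1 ≤ s) (hsm : s ≤ m) :
    ∑ k ∈ range (m+1), pochK (Q ^ (-(m:ℤ))) Q k / pochK Q Q k * (Q ^ s) ^ k = 0 := by
  rw [qbinom Q hQ0 hQ1 m (Q ^ s)]
  refine Finset.prod_eq_zero (i := s - 1) (Finset.mem_range.2 (by omega)) ?_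
  have : (Q:K) ^ s * Q ^ (-(↑(s-1):ℤ)-1) = 1 := by
    rw [← zpow_natCast Q s, ← zpow_add₀ hQ0]
    have : (s:ℤ) + (-(↑(s-1):ℤ)-1) = 0 := by
      have : ((s-1 : ℕ) : ℤ) = (s:ℤ) - 1 := by
        omega
      omega
    rw [this, zpow_zero]
  rw [this, sub_self]

include hQ0 hQ1 in
lemma km_sum {ι : Type*} [DecidableEq ι] (s : Finset ι) (β : ι → K) (m : ℕ)
    (hcard : s.card < m) :
    ∑ k ∈ range (m+1),
      pochK (Q ^ (-(m:ℤ))) Q k / pochK Q Q k * Q ^ k * ∏ l ∈ s, (1 - β l * Q ^ k) = 0 := by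
  have hexp : ∀ k : ℕ, ∏ l ∈ s, (1 - β l * Q ^ k)
      = ∑ t ∈ s.powerset, (∏ l ∈ t, (-(β l))) * (Q ^ k) ^ t.card := by
    intro k
    rw [show (fun l => (1 - β l * Q ^ k)) = fun l => ((-(β l) * Q ^ k) + 1) from
      funext fun l => by ring]
    rw [Finset.prod_add]
    refine Finset.sum_congr rfl fun t _ => ?_
    rw [Finset.prod_mul_distrib, Finset.prod_const, Finset.prod_const_one, mul_one]
  calc ∑ k ∈ range (m+1),
        pochK (Q ^ (-(m:ℤ))) Q k / pochK Q Q k * Q ^ k * ∏ l ∈ s, (1 - β l * Q ^ k)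
      = ∑ k ∈ range (m+1), ∑ t ∈ s.powerset,
          (∏ l ∈ t, (-(β l)))
            * (pochK (Q ^ (-(m:ℤ))) Q k / pochK Q Q k * (Q ^ (t.card + 1)) ^ k) := by
        refine Finset.sum_congr rfl fun k _ => ?_
        rw [hexp k, Finset.mul_sum]
        refine Finset.sum_congr rfl fun t _ => ?_
        have hpow : Q ^ k * (Q ^ k) ^ t.card = (Q ^ (t.card + 1)) ^ k := by
          rw [← pow_mul, ← pow_add, ← pow_mul]
          congr 1
          ring
        rw [← hpow]
        ring
    _ = ∑ t ∈ s.powerset, ∑ k ∈ range (m+1),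
          (∏ l ∈ t, (-(β l)))
            * (pochK (Q ^ (-(m:ℤ))) Q k / pochK Q Q k * (Q ^ (t.card + 1)) ^ k) :=
        Finset.sum_comm
    _ = 0 := by
        refine Finset.sum_eq_zero fun t ht => ?_
        rw [← Finset.mul_sum, base_sum Q hQ0 hQ1 m (t.card + 1) (Nat.le_add_left 1 _)
          (by have := Finset.card_le_card (Finset.mem_powerset.1 ht); omega), mul_zero]
end KM


section KeyId
variable {K : Type*} [Field K]


theorem keyIdentity (X : K) (d h n m μ : ℕ) (r : ℤ)
    (hX0 : X ≠ 0) (hX1 : ∀ c : ℤ, X ^ c = 1 → c = 0)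
    (hdh : d = 2*h+1) (hh : 1 ≤ h)
    (hdm : (d:ℤ) * m = ((d:ℤ)-1) * n - r)
    (hdmu : (d:ℤ) * μ = (n:ℤ) + r - d)
    (hmL : 2*h*μ < m) (hmn : m < n)
    (hcop : IsCoprime (d:ℤ) (n:ℤ)) :
    ∑ k ∈ range n,
      ((∏ i ∈ Icc 1 h, pochK (X ^ (r - ((d:ℤ)+1-2*(i:ℤ))*(n:ℤ))) (X^d) k
          * pochK (X ^ (r + ((d:ℤ)+1-2*(i:ℤ))*(n:ℤ))) (X^d) k)
        * pochK (X ^ r) (X^d) k * (X^d) ^ k)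
      / ((∏ i ∈ Icc 1 h, pochK (X ^ ((d:ℤ) - ((d:ℤ)-2*(i:ℤ))*(n:ℤ))) (X^d) k
          * pochK (X ^ ((d:ℤ) + ((d:ℤ)-2*(i:ℤ))*(n:ℤ))) (X^d) k)
        * pochK (X^d) (X^d) k) = 0 := by
  have hd3 : 3 ≤ d := by omega
  set Q : K := X ^ d with hQdef
  have hQ0 : Q ≠ 0 := pow_ne_zero d hX0
  have hQ1 : ∀ t : ℕ, t ≠ 0 → Q ^ t ≠ 1 := by
    intro t ht hEq
    have h1 : X ^ ((d*t : ℕ) : ℤ) = 1 := by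
      rw [zpow_natCast, pow_mul]; exact hEq
    have h2 := hX1 _ h1
    have : d * t ≠ 0 := by positivity
    omega
  have hzp : ∀ c : ℤ, c ≠ 0 → (1:K) - X ^ c ≠ 0 := by
    intro c hc hEq
    exact hc (hX1 c (sub_eq_zero.1 hEq).symm)
  have hXQ : ∀ (c : ℤ) (j : ℕ), X ^ c * Q ^ j = X ^ (c + (d:ℤ) * j) := by
    intro c j
    have hc : ((d*j:ℕ):ℤ) = (d:ℤ)*(j:ℤ) := by push_cast; ring
    rw [hQdef, ← pow_mul, ← zpow_natCast X (d*j), hc, ← zpow_add₀ hX0]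
  have hQzp : ∀ e : ℤ, Q ^ e = X ^ ((d:ℤ)*e) := by
    intro e
    rw [hQdef, ← zpow_natCast X d, ← zpow_mul]
  have hdvd : ∀ a : ℤ, 1 ≤ a → a ≤ (d:ℤ) - 2 → ¬ ((d:ℤ) ∣ a * n) := by
    intro a h1 h2 hdv
    have h3 := hcop.dvd_of_dvd_mul_right hdv
    have h4 := Int.le_of_dvd (by linarith) h3
    linarith
  -- exponent nonvanishing for denominator-type bases
  have hexp_ne : ∀ (a ε : ℤ) (j : ℕ), 1 ≤ a → a ≤ (d:ℤ) - 2 → (ε = 1 ∨ ε = -1) →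
      (d:ℤ) + ε * (a * n) + (d:ℤ) * j ≠ 0 := by
    intro a ε j h1 h2 hε hEq
    rcases hε with h | h <;> subst h
    · exact hdvd a h1 h2 ⟨-(1 + j), by linear_combination hEq⟩
    · exact hdvd a h1 h2 ⟨1 + j, by linear_combination -hEq⟩
  -- base functions
  set bp : ℕ → ℤ := fun i => (d:ℤ) + ((d:ℤ)-2*((i:ℤ)+1))*(n:ℤ) with hbp
  set bm : ℕ → ℤ := fun i => (d:ℤ) - ((d:ℤ)-2*((i:ℤ)+1))*(n:ℤ) with hbm
  set B : ℕ → ℤ := fun i => if i < h then bp i else bm (i - h) with hB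
  -- all B-based factors are nonzero
  have hBne : ∀ (i j : ℕ), i < 2*h → (1:K) - X ^ (B i + (d:ℤ)*j) ≠ 0 := by
    intro i j hi
    apply hzp
    by_cases hih : i < h
    · have h1 : (1:ℤ) ≤ (d:ℤ)-2*((i:ℤ)+1) := by
        push_cast; omega
      have h2 : (d:ℤ)-2*((i:ℤ)+1) ≤ (d:ℤ)-2 := by push_cast; omega
      have := hexp_ne ((d:ℤ)-2*((i:ℤ)+1)) 1 j h1 h2 (Or.inl rfl)
      simp only [hB, if_pos hih, hbp]
      intro hEq
      exact this (by linear_combination hEq)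
    · have hih2 : i - h < h := by omega
      have h1 : (1:ℤ) ≤ (d:ℤ)-2*(((i-h:ℕ):ℤ)+1) := by omega
      have h2 : (d:ℤ)-2*(((i-h:ℕ):ℤ)+1) ≤ (d:ℤ)-2 := by
        have : (0:ℤ) ≤ ((i-h:ℕ):ℤ) := Int.natCast_nonneg _
        omega
      have := hexp_ne ((d:ℤ)-2*(((i-h:ℕ):ℤ)+1)) (-1) j h1 h2 (Or.inr rfl)
      simp only [hB, if_neg hih, hbm]
      intro hEq
      exact this (by linear_combination hEq)
  -- express h = h' + 1
  obtain ⟨h', rfl⟩ : ∃ h'', h = h'' + 1 := ⟨h - 1, by omega⟩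
  have hdz : (d:ℤ) = 2*(h':ℤ)+3 := by push_cast [hdh]; ring
  have hdzn : (d:ℤ)*(n:ℤ) = (2*(h':ℤ)+3)*(n:ℤ) := by rw [hdz]
  have hpc : ∀ {c c' : ℤ}, c = c' → ∀ k, pochK (X ^ c) Q k = pochK (X ^ c') Q k :=
    fun hcc k => by rw [hcc]
  have hpoch_ne : ∀ (a ε : ℤ), 1 ≤ a → a ≤ (d:ℤ)-2 → (ε = 1 ∨ ε = -1) → ∀ k,
      pochK (X ^ ((d:ℤ) + ε*(a*(n:ℤ)))) Q k ≠ 0 := by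
    intro a ε h1 h2 hε k
    refine Finset.prod_ne_zero_iff.2 fun j _ => ?_
    rw [hXQ]
    exact hzp _ (hexp_ne a ε j h1 h2 hε)
  have hIcc : ∀ (f : ℕ → K), ∏ i ∈ Icc 1 (h'+1), f i = ∏ i ∈ range (h'+1), f (1+i) := by
    intro f
    rw [← Finset.Ico_add_one_right_eq_Icc, Finset.prod_Ico_eq_prod_range]
    norm_num
  -- the shift identity
  have hshift : ∀ (c : ℤ) (k : ℕ),
      pochK (X ^ (c + (d:ℤ)*(μ:ℤ))) Q k * (∏ j ∈ range μ, (1 - X ^ (c + (d:ℤ)*(j:ℤ))))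
        = pochK (X ^ c) Q k * ∏ j ∈ range μ, (1 - X ^ (c + (d:ℤ)*(j:ℤ)) * Q ^ k) := by
    intro c k
    have h0 := pochK_shift (X ^ c) Q μ k
    rw [hXQ c μ] at h0
    calc pochK (X ^ (c + (d:ℤ)*(μ:ℤ))) Q k * (∏ j ∈ range μ, (1 - X ^ (c + (d:ℤ)*(j:ℤ))))
        = pochK (X ^ (c + (d:ℤ)*(μ:ℤ))) Q k * (∏ j ∈ range μ, (1 - X ^ c * Q ^ j)) := by
          congr 1
          exact Finset.prod_congr rfl fun j _ => by rw [hXQ c j]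
      _ = pochK (X ^ c) Q k * ∏ j ∈ range μ, (1 - X ^ c * Q ^ j * Q ^ k) := h0
      _ = _ := by
          congr 1
          exact Finset.prod_congr rfl fun j _ => by rw [hXQ c j]
  set S : Finset (ℕ × ℕ) := range (2*(h'+1)) ×ˢ range μ with hS
  set β : ℕ × ℕ → K := fun p => X ^ (B p.1 + (d:ℤ)*(p.2:ℤ)) with hβ
  set κ : K := ∏ p ∈ S, (1 - β p) with hκ
  have hκne : κ ≠ 0 := by
    rw [hκ]
    refine Finset.prod_ne_zero_iff.2 fun p hp => ?_
    obtain ⟨hp1, _⟩ := Finset.mem_product.1 hp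
    have hb : β p = X ^ (B p.1 + (d:ℤ)*(p.2:ℤ)) := rfl
    rw [hb]
    exact hBne p.1 p.2 (by simpa using Finset.mem_range.1 hp1)
  -- splitting of the product set
  have hsplitS : ∀ (F : ℕ × ℕ → K), ∏ p ∈ S, F p
      = (∏ i ∈ range (h'+1), ∏ j ∈ range μ, F (i, j))
        * ∏ i ∈ range (h'+1), ∏ j ∈ range μ, F ((h'+1) + i, j) := by
    intro F
    rw [hS, Finset.prod_product, show 2*(h'+1) = (h'+1) + (h'+1) from by ring,
      Finset.prod_range_add]
  have hBlow : ∀ i, i < h'+1 → B i = bp i := fun i hi => by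
    simp only [hB, if_pos hi]
  have hBhigh : ∀ i, B ((h'+1) + i) = bm ((h'+1) + i - (h'+1)) := fun i => by
    simp only [hB, if_neg (by omega : ¬ ((h'+1) + i < h'+1))]
  -- the per-term factorization
  have hterm : ∀ k : ℕ,
      ((∏ i ∈ Icc 1 (h'+1), pochK (X ^ (r - ((d:ℤ)+1-2*(i:ℤ))*(n:ℤ))) Q k
          * pochK (X ^ (r + ((d:ℤ)+1-2*(i:ℤ))*(n:ℤ))) Q k)
        * pochK (X ^ r) Q k * Q ^ k)
      / ((∏ i ∈ Icc 1 (h'+1), pochK (X ^ ((d:ℤ) - ((d:ℤ)-2*(i:ℤ))*(n:ℤ))) Q k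
          * pochK (X ^ ((d:ℤ) + ((d:ℤ)-2*(i:ℤ))*(n:ℤ))) Q k)
        * pochK Q Q k)
      = pochK (Q ^ (-(m:ℤ))) Q k / pochK Q Q k * Q ^ k * (∏ p ∈ S, (1 - β p * Q ^ k)) / κ := by
    intro k
    rw [hIcc, hIcc]
    have hD0 : pochK Q Q k ≠ 0 := pochQQ_ne Q hQ1 k
    have hDmne : ∀ i ∈ range (h'+1),
        pochK (X ^ ((d:ℤ) - ((d:ℤ)-2*((1+i:ℕ):ℤ))*(n:ℤ))) Q k
          * pochK (X ^ ((d:ℤ) + ((d:ℤ)-2*((1+i:ℕ):ℤ))*(n:ℤ))) Q k ≠ 0 := by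
      intro i hi
      have hi' : i < h'+1 := Finset.mem_range.1 hi
      refine mul_ne_zero ?_ ?_
      · rw [hpc (show (d:ℤ) - ((d:ℤ)-2*((1+i:ℕ):ℤ))*(n:ℤ)
          = (d:ℤ) + (-1)*(((d:ℤ)-2*((i:ℤ)+1))*(n:ℤ)) from by push_cast; ring)]
        exact hpoch_ne _ _ (by omega) (by omega) (Or.inr rfl) k
      · rw [hpc (show (d:ℤ) + ((d:ℤ)-2*((1+i:ℕ):ℤ))*(n:ℤ)
          = (d:ℤ) + 1*(((d:ℤ)-2*((i:ℤ)+1))*(n:ℤ)) from by push_cast; ring)]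
        exact hpoch_ne _ _ (by omega) (by omega) (Or.inl rfl) k
    have hDD : (∏ i ∈ range (h'+1),
        pochK (X ^ ((d:ℤ) - ((d:ℤ)-2*((1+i:ℕ):ℤ))*(n:ℤ))) Q k
          * pochK (X ^ ((d:ℤ) + ((d:ℤ)-2*((1+i:ℕ):ℤ))*(n:ℤ))) Q k) ≠ 0 :=
      Finset.prod_ne_zero_iff.2 hDmne
    -- e1 : minus-family numerator with extra pochK (X^r)
    have e1 : (∏ i ∈ range (h'+1), pochK (X ^ (r - ((d:ℤ)+1-2*((1+i:ℕ):ℤ))*(n:ℤ))) Q k)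
        * pochK (X ^ r) Q k
        = pochK (Q ^ (-(m:ℤ))) Q k
          * ∏ i ∈ range (h'+1), pochK (X ^ (bm i + (d:ℤ)*(μ:ℤ))) Q k := by
      rw [Finset.prod_range_succ'
        (fun i => pochK (X ^ (r - ((d:ℤ)+1-2*((1+i:ℕ):ℤ))*(n:ℤ))) Q k) h']
      rw [Finset.prod_range_succ (fun i => pochK (X ^ (bm i + (d:ℤ)*(μ:ℤ))) Q k) h']
      have c0 : pochK (X ^ (r - ((d:ℤ)+1-2*((1+0:ℕ):ℤ))*(n:ℤ))) Q k
          = pochK (Q ^ (-(m:ℤ))) Q k := by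
        rw [hQzp (-(m:ℤ))]
        exact hpc (by push_cast; linarith [hdm, hdmu, hdzn]) k
      have cl : pochK (X ^ r) Q k = pochK (X ^ (bm h' + (d:ℤ)*(μ:ℤ))) Q k := by
        refine hpc ?_ k
        simp only [hbm]
        push_cast
        linarith [hdm, hdmu, hdzn]
      have cm : ∀ i ∈ range h',
          pochK (X ^ (r - ((d:ℤ)+1-2*((1+(i+1):ℕ):ℤ))*(n:ℤ))) Q k
            = pochK (X ^ (bm i + (d:ℤ)*(μ:ℤ))) Q k := by
        intro i _
        refine hpc ?_ k
        simp only [hbm]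
        push_cast
        linarith [hdm, hdmu, hdzn]
      rw [Finset.prod_congr rfl cm, c0, cl]
      ring
    have e2 : (∏ i ∈ range (h'+1), pochK (X ^ (r + ((d:ℤ)+1-2*((1+i:ℕ):ℤ))*(n:ℤ))) Q k)
        = ∏ i ∈ range (h'+1), pochK (X ^ (bp i + (d:ℤ)*(μ:ℤ))) Q k := by
      refine Finset.prod_congr rfl fun i _ => ?_
      refine hpc ?_ k
      simp only [hbp]
      push_cast
      linarith [hdm, hdmu, hdzn]
    have e0d : (∏ i ∈ range (h'+1),
        pochK (X ^ ((d:ℤ) - ((d:ℤ)-2*((1+i:ℕ):ℤ))*(n:ℤ))) Q k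
          * pochK (X ^ ((d:ℤ) + ((d:ℤ)-2*((1+i:ℕ):ℤ))*(n:ℤ))) Q k)
        = (∏ i ∈ range (h'+1), pochK (X ^ (bm i)) Q k)
          * ∏ i ∈ range (h'+1), pochK (X ^ (bp i)) Q k := by
      rw [Finset.prod_mul_distrib]
      congr 1
      · refine Finset.prod_congr rfl fun i _ => ?_
        refine hpc ?_ k
        simp only [hbm]
        push_cast
        ring
      · refine Finset.prod_congr rfl fun i _ => ?_
        refine hpc ?_ k
        simp only [hbp]
        push_cast
        ring
    have e4 : (∏ i ∈ range (h'+1), pochK (X ^ (bm i + (d:ℤ)*(μ:ℤ))) Q k)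
        * (∏ i ∈ range (h'+1), ∏ j ∈ range μ, (1 - X ^ (bm i + (d:ℤ)*(j:ℤ))))
        = (∏ i ∈ range (h'+1), pochK (X ^ (bm i)) Q k)
          * ∏ i ∈ range (h'+1), ∏ j ∈ range μ, (1 - X ^ (bm i + (d:ℤ)*(j:ℤ)) * Q ^ k) := by
      rw [← Finset.prod_mul_distrib, ← Finset.prod_mul_distrib]
      exact Finset.prod_congr rfl fun i _ => hshift (bm i) k
    have e5 : (∏ i ∈ range (h'+1), pochK (X ^ (bp i + (d:ℤ)*(μ:ℤ))) Q k)
        * (∏ i ∈ range (h'+1), ∏ j ∈ range μ, (1 - X ^ (bp i + (d:ℤ)*(j:ℤ))))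
        = (∏ i ∈ range (h'+1), pochK (X ^ (bp i)) Q k)
          * ∏ i ∈ range (h'+1), ∏ j ∈ range μ, (1 - X ^ (bp i + (d:ℤ)*(j:ℤ)) * Q ^ k) := by
      rw [← Finset.prod_mul_distrib, ← Finset.prod_mul_distrib]
      exact Finset.prod_congr rfl fun i _ => hshift (bp i) k
    have hκsplit : κ = (∏ i ∈ range (h'+1), ∏ j ∈ range μ, (1 - X ^ (bp i + (d:ℤ)*(j:ℤ))))
        * ∏ i ∈ range (h'+1), ∏ j ∈ range μ, (1 - X ^ (bm i + (d:ℤ)*(j:ℤ))) := by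
      rw [hκ, hsplitS (fun p => 1 - β p)]
      congr 1
      · refine Finset.prod_congr rfl fun i hi => Finset.prod_congr rfl fun j _ => ?_
        show 1 - X ^ (B i + (d:ℤ)*(j:ℤ)) = _
        rw [hBlow i (Finset.mem_range.1 hi)]
      · refine Finset.prod_congr rfl fun i hi => Finset.prod_congr rfl fun j _ => ?_
        show 1 - X ^ (B ((h'+1)+i) + (d:ℤ)*(j:ℤ)) = _
        rw [hBhigh i, Nat.add_sub_cancel_left]
    have hGsplit : (∏ p ∈ S, (1 - β p * Q ^ k)) = (∏ i ∈ range (h'+1), ∏ j ∈ range μ, (1 - X ^ (bp i + (d:ℤ)*(j:ℤ)) * Q ^ k))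
        * ∏ i ∈ range (h'+1), ∏ j ∈ range μ, (1 - X ^ (bm i + (d:ℤ)*(j:ℤ)) * Q ^ k) := by
      rw [hsplitS (fun p => 1 - β p * Q ^ k)]
      congr 1
      · refine Finset.prod_congr rfl fun i hi => Finset.prod_congr rfl fun j _ => ?_
        show 1 - X ^ (B i + (d:ℤ)*(j:ℤ)) * Q ^ k = _
        rw [hBlow i (Finset.mem_range.1 hi)]
      · refine Finset.prod_congr rfl fun i hi => Finset.prod_congr rfl fun j _ => ?_
        show 1 - X ^ (B ((h'+1)+i) + (d:ℤ)*(j:ℤ)) * Q ^ k = _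
        rw [hBhigh i, Nat.add_sub_cancel_left]
    have hNum : ((∏ i ∈ range (h'+1),
          pochK (X ^ (r - ((d:ℤ)+1-2*((1+i:ℕ):ℤ))*(n:ℤ))) Q k
            * pochK (X ^ (r + ((d:ℤ)+1-2*((1+i:ℕ):ℤ))*(n:ℤ))) Q k)
        * pochK (X ^ r) Q k * Q ^ k) * κ
        = pochK (Q ^ (-(m:ℤ))) Q k * Q ^ k * (∏ p ∈ S, (1 - β p * Q ^ k))
          * ((∏ i ∈ range (h'+1),
              pochK (X ^ ((d:ℤ) - ((d:ℤ)-2*((1+i:ℕ):ℤ))*(n:ℤ))) Q k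
                * pochK (X ^ ((d:ℤ) + ((d:ℤ)-2*((1+i:ℕ):ℤ))*(n:ℤ))) Q k)) := by
      rw [Finset.prod_mul_distrib, hκsplit, e0d, hGsplit]
      calc ((∏ i ∈ range (h'+1), pochK (X ^ (r - ((d:ℤ)+1-2*((1+i:ℕ):ℤ))*(n:ℤ))) Q k)
            * (∏ i ∈ range (h'+1), pochK (X ^ (r + ((d:ℤ)+1-2*((1+i:ℕ):ℤ))*(n:ℤ))) Q k)
            * pochK (X ^ r) Q k * Q ^ k)
            * ((∏ i ∈ range (h'+1), ∏ j ∈ range μ, (1 - X ^ (bp i + (d:ℤ)*(j:ℤ))))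
              * ∏ i ∈ range (h'+1), ∏ j ∈ range μ, (1 - X ^ (bm i + (d:ℤ)*(j:ℤ))))
          = ((∏ i ∈ range (h'+1), pochK (X ^ (r - ((d:ℤ)+1-2*((1+i:ℕ):ℤ))*(n:ℤ))) Q k)
              * pochK (X ^ r) Q k)
            * (∏ i ∈ range (h'+1), pochK (X ^ (r + ((d:ℤ)+1-2*((1+i:ℕ):ℤ))*(n:ℤ))) Q k)
            * Q ^ k
            * ((∏ i ∈ range (h'+1), ∏ j ∈ range μ, (1 - X ^ (bp i + (d:ℤ)*(j:ℤ))))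
              * ∏ i ∈ range (h'+1), ∏ j ∈ range μ, (1 - X ^ (bm i + (d:ℤ)*(j:ℤ)))) := by
            ring
        _ = (pochK (Q ^ (-(m:ℤ))) Q k
              * ∏ i ∈ range (h'+1), pochK (X ^ (bm i + (d:ℤ)*(μ:ℤ))) Q k)
            * (∏ i ∈ range (h'+1), pochK (X ^ (bp i + (d:ℤ)*(μ:ℤ))) Q k)
            * Q ^ k
            * ((∏ i ∈ range (h'+1), ∏ j ∈ range μ, (1 - X ^ (bp i + (d:ℤ)*(j:ℤ))))
              * ∏ i ∈ range (h'+1), ∏ j ∈ range μ, (1 - X ^ (bm i + (d:ℤ)*(j:ℤ)))) := by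
            rw [e1, e2]
        _ = pochK (Q ^ (-(m:ℤ))) Q k * Q ^ k
            * (((∏ i ∈ range (h'+1), pochK (X ^ (bm i + (d:ℤ)*(μ:ℤ))) Q k)
                * (∏ i ∈ range (h'+1), ∏ j ∈ range μ, (1 - X ^ (bm i + (d:ℤ)*(j:ℤ)))))
              * ((∏ i ∈ range (h'+1), pochK (X ^ (bp i + (d:ℤ)*(μ:ℤ))) Q k)
                * (∏ i ∈ range (h'+1), ∏ j ∈ range μ, (1 - X ^ (bp i + (d:ℤ)*(j:ℤ)))))) := by
            ring
        _ = pochK (Q ^ (-(m:ℤ))) Q k * Q ^ k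
            * (((∏ i ∈ range (h'+1), pochK (X ^ (bm i)) Q k)
                * (∏ i ∈ range (h'+1), ∏ j ∈ range μ, (1 - X ^ (bm i + (d:ℤ)*(j:ℤ)) * Q ^ k)))
              * ((∏ i ∈ range (h'+1), pochK (X ^ (bp i)) Q k)
                * (∏ i ∈ range (h'+1), ∏ j ∈ range μ, (1 - X ^ (bp i + (d:ℤ)*(j:ℤ)) * Q ^ k)))) := by
            rw [e4, e5]
        _ = _ := by ring
    have hRHS : pochK (Q ^ (-(m:ℤ))) Q k / pochK Q Q k * Q ^ k * (∏ p ∈ S, (1 - β p * Q ^ k)) / κ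
        = (pochK (Q ^ (-(m:ℤ))) Q k * Q ^ k * (∏ p ∈ S, (1 - β p * Q ^ k))) / (pochK Q Q k * κ) := by
      field_simp
    rw [hRHS, div_eq_div_iff (mul_ne_zero hDD hD0) (mul_ne_zero hD0 hκne)]
    linear_combination (pochK Q Q k) * hNum
  -- final summation
  have hvanish : ∀ k, m < k → pochK (Q ^ (-(m:ℤ))) Q k = 0 := by
    intro k hk
    refine Finset.prod_eq_zero (Finset.mem_range.2 hk) ?_
    rw [← zpow_natCast Q m, ← zpow_add₀ hQ0]
    simp
  rw [Finset.sum_congr rfl fun k _ => hterm k]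
  rw [Finset.sum_congr rfl fun k (_ : k ∈ range n) =>
    (div_eq_mul_inv (pochK (Q ^ (-(m:ℤ))) Q k / pochK Q Q k * Q ^ k * (∏ p ∈ S, (1 - β p * Q ^ k))) κ)]
  rw [← Finset.sum_mul]
  have hmain : ∑ k ∈ range n, pochK (Q ^ (-(m:ℤ))) Q k / pochK Q Q k * Q ^ k * (∏ p ∈ S, (1 - β p * Q ^ k)) = 0 := by
    have hsub : range (m+1) ⊆ range n := fun x hx => Finset.mem_range.2 (by have := Finset.mem_range.1 hx; omega)
    rw [← Finset.sum_subset hsub ?hzero]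
    case hzero =>
      intro k _ hk2
      have hmk : m < k := by
        by_contra hcon
        exact hk2 (Finset.mem_range.2 (by omega))
      rw [hvanish k hmk]
      simp
    have hcard : S.card < m := by
      rw [hS, Finset.card_product, Finset.card_range, Finset.card_range]
      omega
    exact km_sum Q hQ0 hQ1 S β m hcard
  rw [hmain, zero_mul]


end KeyId



-- evaluation hom sending a ↦ u, q ↦ qv
noncomputable def evH (u : FF) : MvP →+* FF :=
  (MvPolynomial.aeval (fun i : Fin 2 => if i = 0 then u else qv)).toRingHom

@[simp] lemma evH_X0 (u : FF) : evH u (MvPolynomial.X 0) = u := by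
  simp [evH]

@[simp] lemma evH_X1 (u : FF) : evH u (MvPolynomial.X 1) = qv := by
  simp [evH]

abbrev Rin : Type := MvPolynomial (Fin 1) ℚ

noncomputable def eFS : MvP ≃ₐ[ℚ] Polynomial Rin := MvPolynomial.finSuccEquiv ℚ 1

noncomputable def phiFS : Rin →+* FF := (MvPolynomial.aeval (fun _ : Fin 1 => qv)).toRingHom

@[simp] lemma phiFS_X0 : phiFS (MvPolynomial.X 0) = qv := by simp [phiFS]

lemma phiFS_injective : Function.Injective phiFS := by
  have h1 : Function.Injective (MvPolynomial.rename (R := ℚ) (fun _ : Fin 1 => (1 : Fin 2))) :=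
    MvPolynomial.rename_injective _ (fun a b _ => Subsingleton.elim a b)
  have h2 : Function.Injective (algebraMap MvP FF) := IsFractionRing.injective MvP FF
  have key : phiFS = (algebraMap MvP FF).comp
      (MvPolynomial.rename (R := ℚ) (fun _ : Fin 1 => (1 : Fin 2))).toRingHom := by
    apply MvPolynomial.ringHom_ext
    · intro r
      simp only [phiFS, RingHom.comp_apply, AlgHom.toRingHom_eq_coe, RingHom.coe_coe,
        MvPolynomial.aeval_C, MvPolynomial.rename_C]
      exact (eq_ratCast ((algebraMap MvP FF).comp (MvPolynomial.C)) r).symm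
    · intro i
      have : i = 0 := Subsingleton.elim i 0
      subst this
      simp [phiFS, qv, MvPolynomial.rename_X]
  rw [key]
  exact h2.comp (by exact h1)

lemma eFS_X0 : eFS (MvPolynomial.X 0) = Polynomial.X := MvPolynomial.finSuccEquiv_X_zero

lemma eFS_X1 : eFS (MvPolynomial.X 1) = Polynomial.C (MvPolynomial.X 0) := by
  have h1 : (1 : Fin 2) = (0 : Fin 1).succ := rfl
  rw [h1]
  exact MvPolynomial.finSuccEquiv_X_succ

lemma eFS_C (r : ℚ) : eFS (MvPolynomial.C r) = Polynomial.C (MvPolynomial.C r) := by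
  simp [eFS, MvPolynomial.finSuccEquiv_apply]

lemma evH_eval₂ (u : FF) (p : MvP) :
    evH u p = Polynomial.eval₂ phiFS u (eFS p) := by
  induction p using MvPolynomial.induction_on with
  | C r =>
    rw [eFS_C, Polynomial.eval₂_C]
    simp [evH, phiFS]
  | add p q hp hq =>
    rw [map_add, map_add, Polynomial.eval₂_add, hp, hq]
  | mul_X p i hp =>
    rw [map_mul, map_mul, Polynomial.eval₂_mul, hp]
    congr 1
    fin_cases i
    · show evH u (MvPolynomial.X 0) = Polynomial.eval₂ phiFS u (eFS (MvPolynomial.X 0))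
      rw [eFS_X0, Polynomial.eval₂_X, evH_X0]
    · show evH u (MvPolynomial.X 1) = Polynomial.eval₂ phiFS u (eFS (MvPolynomial.X 1))
      rw [eFS_X1, Polynomial.eval₂_C, phiFS_X0, evH_X1]

lemma bVar_ne (n : ℕ) : (MvPolynomial.X 0 ^ n : Rin) ≠ 0 :=
  pow_ne_zero _ (MvPolynomial.X_ne_zero 0)

-- divisibility from vanishing at a = q^n
lemma dvd_P2_of_ev (n : ℕ) (N : MvP) (hev : evH (qv ^ (n:ℤ)) N = 0) :
    (MvPolynomial.X 0 - MvPolynomial.X 1 ^ n : MvP) ∣ N := by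
  set b : Rin := MvPolynomial.X 0 ^ n with hb
  have hφb : phiFS b = qv ^ (n:ℤ) := by
    rw [hb, map_pow, phiFS_X0, zpow_natCast]
  rw [evH_eval₂, ← hφb, Polynomial.eval₂_at_apply] at hev
  have hroot : Polynomial.eval b (eFS N) = 0 := phiFS_injective (by simpa using hev)
  have hdvd : (Polynomial.X - Polynomial.C b) ∣ eFS N :=
    Polynomial.dvd_iff_isRoot.2 hroot
  have hsymm : (eFS.symm (Polynomial.X - Polynomial.C b) : MvP)
      = MvPolynomial.X 0 - MvPolynomial.X 1 ^ n := by
    apply eFS.injective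
    rw [AlgEquiv.apply_symm_apply, map_sub]
    rw [show eFS (MvPolynomial.X 1 ^ n) = (eFS (MvPolynomial.X 1))^n from map_pow _ _ _]
    rw [eFS_X0, eFS_X1, ← Polynomial.C_pow]
  calc (MvPolynomial.X 0 - MvPolynomial.X 1 ^ n : MvP)
      = eFS.symm (Polynomial.X - Polynomial.C b) := hsymm.symm
    _ ∣ eFS.symm (eFS N) := map_dvd (eFS.symm : Polynomial Rin ≃ₐ[ℚ] MvP) hdvd
    _ = N := eFS.symm_apply_apply N

-- divisibility from vanishing at a = q^(-n)
lemma dvd_P1_of_ev (n : ℕ) (N : MvP) (hev : evH (qv ^ (-(n:ℤ))) N = 0) (hqv0 : qv ≠ 0) :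
    (1 - MvPolynomial.X 0 * MvPolynomial.X 1 ^ n : MvP) ∣ N := by
  classical
  set b : Rin := MvPolynomial.X 0 ^ n with hbdef
  set N' : Polynomial Rin := eFS N with hN'
  set D : ℕ := N'.natDegree with hD
  -- the coefficient condition
  have hcond : ∑ i ∈ range (D+1), N'.coeff i * b ^ (D - i) = 0 := by
    apply phiFS_injective
    rw [map_zero, map_sum]
    have hexpand : evH (qv ^ (-(n:ℤ))) N
        = ∑ i ∈ range (D+1), phiFS (N'.coeff i) * (qv ^ (-(n:ℤ))) ^ i := by
      rw [evH_eval₂, Polynomial.eval₂_eq_sum_range]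
    rw [hexpand] at hev
    have hmul := congrArg (fun z : FF => z * qv ^ ((n*D : ℕ):ℤ)) hev
    simp only [zero_mul, Finset.sum_mul] at hmul
    rw [← hmul]
    refine Finset.sum_congr rfl fun i hi => ?_
    have hiD : i ≤ D := by have := Finset.mem_range.1 hi; omega
    have hpow : (qv ^ (-(n:ℤ))) ^ i * qv ^ ((n*D : ℕ):ℤ) = qv ^ ((n*(D-i) : ℕ):ℤ) := by
      calc (qv ^ (-(n:ℤ))) ^ i * qv ^ ((n*D : ℕ):ℤ)
          = qv ^ ((-(n:ℤ))*(i:ℤ)) * qv ^ ((n*D:ℕ):ℤ) := by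
            rw [← zpow_natCast (qv ^ (-(n:ℤ))) i, ← zpow_mul]
        _ = qv ^ ((-(n:ℤ))*(i:ℤ) + ((n*D:ℕ):ℤ)) := (zpow_add₀ hqv0 _ _).symm
        _ = qv ^ ((n*(D-i) : ℕ):ℤ) := by
            congr 1
            push_cast [Nat.cast_sub hiD]
            ring
    have hφb : phiFS (b ^ (D-i)) = qv ^ ((n*(D-i) : ℕ):ℤ) := by
      rw [hbdef, ← pow_mul, map_pow, phiFS_X0, zpow_natCast]
    rw [map_mul, hφb, ← hpow]
    ring
  -- the quotient construction
  set f : ℕ → Rin := fun j => ∑ i ∈ range (j+1), N'.coeff i * b ^ (j - i) with hf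
  have hrec : ∀ j, f (j+1) = N'.coeff (j+1) + b * f j := by
    intro j
    rw [hf]
    simp only []
    rw [Finset.sum_range_succ, Finset.mul_sum]
    have : ∀ i ∈ range (j+1), N'.coeff i * b ^ (j + 1 - i) = b * (N'.coeff i * b ^ (j - i)) := by
      intro i hi
      have hij : i ≤ j := by have := Finset.mem_range.1 hi; omega
      rw [show j + 1 - i = (j - i) + 1 from by omega, pow_succ]
      ring
    rw [Finset.sum_congr rfl this, Nat.sub_self, pow_zero, mul_one]
    ring
  have hfD : f D = 0 := hcond
  have hfge : ∀ j, D ≤ j → f j = 0 := by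
    intro j hj
    induction j with
    | zero =>
      have hD0 : D = 0 := Nat.le_zero.1 hj
      rw [← hD0]
      exact hfD
    | succ j ih =>
      rcases Nat.lt_or_ge D (j+1) with hlt | hge
      · have hDj : D ≤ j := by omega
        rw [hrec, ih hDj, mul_zero, add_zero,
          Polynomial.coeff_eq_zero_of_natDegree_lt (by omega : N'.natDegree < j + 1)]
      · have hDj : D = j + 1 := by omega
        rw [← hDj]
        exact hfD
  set H : Polynomial Rin := ∑ j ∈ range (D+1), Polynomial.C (f j) * Polynomial.X ^ j with hH
  have hHcoeff : ∀ j, H.coeff j = f j := by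
    intro j
    rw [hH, Polynomial.finset_sum_coeff]
    simp only [Polynomial.coeff_C_mul, Polynomial.coeff_X_pow, mul_ite, mul_one, mul_zero]
    by_cases hj : j ≤ D
    · rw [Finset.sum_eq_single j (fun l _ hne => by rw [if_neg (fun hc => hne hc.symm)])
        (fun hnot => absurd (Finset.mem_range.2 (by omega)) hnot)]
      rw [if_pos rfl]
    · rw [Finset.sum_eq_zero (fun l hl => by
        rw [if_neg (fun hc => by have := Finset.mem_range.1 hl; omega)])]
      exact (hfge j (by omega)).symm
  have hProd : (1 - Polynomial.C b * Polynomial.X) * H = N' := by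
    ext j
    have hlhs : ((1 - Polynomial.C b * Polynomial.X) * H).coeff j
        = H.coeff j - b * (Polynomial.X * H).coeff j := by
      rw [sub_mul, one_mul, Polynomial.coeff_sub, mul_assoc, Polynomial.coeff_C_mul]
    rw [hlhs]
    cases j with
    | zero =>
      rw [Polynomial.mul_coeff_zero, Polynomial.coeff_X_zero, zero_mul, mul_zero, sub_zero,
        hHcoeff 0]
      rw [hf]
      simp
    | succ j =>
      rw [Polynomial.coeff_X_mul, hHcoeff, hHcoeff, hrec]
      ring
  -- transfer back
  have hP1 : eFS (1 - MvPolynomial.X 0 * MvPolynomial.X 1 ^ n : MvP)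
      = 1 - Polynomial.C b * Polynomial.X := by
    rw [map_sub, map_one, map_mul]
    rw [show eFS (MvPolynomial.X 1 ^ n) = (eFS (MvPolynomial.X 1))^n from map_pow _ _ _]
    rw [eFS_X0, eFS_X1, ← Polynomial.C_pow, hbdef]
    ring
  have hdvd : eFS (1 - MvPolynomial.X 0 * MvPolynomial.X 1 ^ n : MvP) ∣ eFS N := by
    rw [hP1, ← hN']
    exact ⟨H, hProd.symm⟩
  have := map_dvd (eFS.symm : Polynomial Rin ≃ₐ[ℚ] MvP) hdvd
  rwa [eFS.symm_apply_apply, eFS.symm_apply_apply] at this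

-- primality
lemma irred_deg_one {R' : Type*} [CommRing R'] [IsDomain R'] (p : Polynomial R')
    (hdeg : p.natDegree = 1) (hu : ∃ j, IsUnit (p.coeff j)) : Irreducible p := by
  constructor
  · intro h
    rw [Polynomial.natDegree_eq_zero_of_isUnit h] at hdeg
    exact one_ne_zero hdeg.symm
  · intro f g hfg
    have hp0 : p ≠ 0 := fun h0 => by simp [h0] at hdeg
    have hf0 : f ≠ 0 := fun h0 => hp0 (by rw [hfg, h0, zero_mul])
    have hg0 : g ≠ 0 := fun h0 => hp0 (by rw [hfg, h0, mul_zero])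
    have hsum : f.natDegree + g.natDegree = 1 := by
      rw [← Polynomial.natDegree_mul hf0 hg0, ← hfg, hdeg]
    obtain ⟨j, hj⟩ := hu
    rcases Nat.eq_zero_or_pos f.natDegree with hdf | hdf
    · left
      have hfC : f = Polynomial.C (f.coeff 0) := Polynomial.eq_C_of_natDegree_eq_zero hdf
      have : p.coeff j = f.coeff 0 * g.coeff j := by
        conv_lhs => rw [hfg, hfC]
        rw [Polynomial.coeff_C_mul]
      rw [this] at hj
      rw [hfC, Polynomial.isUnit_C]
      exact isUnit_of_mul_isUnit_left hj
    · right
      have hdg : g.natDegree = 0 := by omega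
      have hgC : g = Polynomial.C (g.coeff 0) := Polynomial.eq_C_of_natDegree_eq_zero hdg
      have : p.coeff j = g.coeff 0 * f.coeff j := by
        conv_lhs => rw [hfg, hgC]
        rw [mul_comm f, Polynomial.coeff_C_mul]
      rw [this] at hj
      rw [hgC, Polynomial.isUnit_C]
      exact isUnit_of_mul_isUnit_left hj

lemma prime_of_equiv {A B : Type*} [CommRing A] [CommRing B] (f : A ≃+* B) {a : A}
    (h : Prime (f a)) : Prime a := by
  refine ⟨fun h0 => h.1 (by rw [h0, map_zero]), fun hu => h.2.1 (hu.map f), ?_⟩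
  intro x y hxy
  have hfa : f a ∣ f x * f y := by
    rw [← map_mul]
    exact map_dvd (f : A →+* B) hxy
  rcases h.2.2 _ _ hfa with hc | hc
  · left
    obtain ⟨c, hc⟩ := hc
    exact ⟨f.symm c, by
      have := congrArg f.symm hc
      rwa [f.symm_apply_apply, map_mul, f.symm_apply_apply] at this⟩
  · right
    obtain ⟨c, hc⟩ := hc
    exact ⟨f.symm c, by
      have := congrArg f.symm hc
      rwa [f.symm_apply_apply, map_mul, f.symm_apply_apply] at this⟩

lemma prime_P2 (n : ℕ) (hn : 0 < n) :
    Prime (MvPolynomial.X 0 - MvPolynomial.X 1 ^ n : MvP) := by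
  set b : Rin := MvPolynomial.X 0 ^ n with hbdef
  have hirr : Irreducible (Polynomial.X - Polynomial.C b) := by
    refine irred_deg_one _ (Polynomial.natDegree_X_sub_C b) ⟨1, ?_⟩
    have : (Polynomial.X - Polynomial.C b).coeff 1 = 1 := by
      rw [Polynomial.coeff_sub, Polynomial.coeff_X_one, Polynomial.coeff_C]
      norm_num
    rw [this]
    exact isUnit_one
  have hprime : Prime (Polynomial.X - Polynomial.C b) :=
    (UniqueFactorizationMonoid.irreducible_iff_prime).1 hirr
  apply prime_of_equiv (eFS.toRingEquiv)
  have : eFS (MvPolynomial.X 0 - MvPolynomial.X 1 ^ n : MvP) = Polynomial.X - Polynomial.C b := by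
    rw [map_sub]
    rw [show eFS (MvPolynomial.X 1 ^ n) = (eFS (MvPolynomial.X 1))^n from map_pow _ _ _]
    rw [eFS_X0, eFS_X1, ← Polynomial.C_pow, hbdef]
  show Prime (eFS _)
  rw [this]
  exact hprime

lemma prime_P1 (n : ℕ) (hn : 0 < n) :
    Prime (1 - MvPolynomial.X 0 * MvPolynomial.X 1 ^ n : MvP) := by
  set b : Rin := MvPolynomial.X 0 ^ n with hbdef
  have hb0 : b ≠ 0 := bVar_ne n
  have hdeg : (1 - Polynomial.C b * Polynomial.X : Polynomial Rin).natDegree = 1 := by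
    rw [show (1 - Polynomial.C b * Polynomial.X : Polynomial Rin)
      = Polynomial.C (-b) * Polynomial.X + Polynomial.C 1 from by rw [map_neg, map_one]; ring]
    exact Polynomial.natDegree_linear (neg_ne_zero.2 hb0)
  have hirr : Irreducible (1 - Polynomial.C b * Polynomial.X : Polynomial Rin) := by
    refine irred_deg_one _ hdeg ⟨0, ?_⟩
    have : (1 - Polynomial.C b * Polynomial.X : Polynomial Rin).coeff 0 = 1 := by
      simp
    rw [this]
    exact isUnit_one
  have hprime : Prime (1 - Polynomial.C b * Polynomial.X : Polynomial Rin) :=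
    (UniqueFactorizationMonoid.irreducible_iff_prime).1 hirr
  apply prime_of_equiv (eFS.toRingEquiv)
  have hP1 : eFS (1 - MvPolynomial.X 0 * MvPolynomial.X 1 ^ n : MvP)
      = 1 - Polynomial.C b * Polynomial.X := by
    rw [map_sub, map_one, map_mul]
    rw [show eFS (MvPolynomial.X 1 ^ n) = (eFS (MvPolynomial.X 1))^n from map_pow _ _ _]
    rw [eFS_X0, eFS_X1, ← Polynomial.C_pow, hbdef]
    ring
  show Prime (eFS _)
  rw [hP1]
  exact hprime

section Good
variable (u1 u2 : FF)

def Good (y v1 v2 : FF) : Prop :=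
  ∃ N C : MvP, evH u1 C ≠ 0 ∧ evH u2 C ≠ 0 ∧
    algebraMap MvP FF C * y = algebraMap MvP FF N ∧
    evH u1 N = v1 * evH u1 C ∧ evH u2 N = v2 * evH u2 C

lemma good_poly (p : MvP) : Good u1 u2 (algebraMap MvP FF p) (evH u1 p) (evH u2 p) :=
  ⟨p, 1, by simp, by simp, by simp, by simp, by simp⟩

lemma good_congr {y v1 v2 w1 w2 : FF} (h : Good u1 u2 y v1 v2) (h1 : v1 = w1)
    (h2 : v2 = w2) : Good u1 u2 y w1 w2 := h1 ▸ h2 ▸ h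

lemma good_one : Good u1 u2 1 1 1 := by
  have := good_poly u1 u2 1
  simpa using this

lemma good_add {y v1 v2 z w1 w2 : FF} (hy : Good u1 u2 y v1 v2) (hz : Good u1 u2 z w1 w2) :
    Good u1 u2 (y + z) (v1 + w1) (v2 + w2) := by
  obtain ⟨N, C, hC1, hC2, hE, h1, h2⟩ := hy
  obtain ⟨N', C', hC1', hC2', hE', h1', h2'⟩ := hz
  refine ⟨N * C' + N' * C, C * C', by simp [hC1, hC1'], by simp [hC2, hC2'], ?_, ?_, ?_⟩
  · rw [map_add, map_mul, map_mul, map_mul, ← hE, ← hE']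
    ring
  · rw [map_add, map_mul, map_mul, map_mul, h1, h1']
    ring
  · rw [map_add, map_mul, map_mul, map_mul, h2, h2']
    ring

lemma good_mul {y v1 v2 z w1 w2 : FF} (hy : Good u1 u2 y v1 v2) (hz : Good u1 u2 z w1 w2) :
    Good u1 u2 (y * z) (v1 * w1) (v2 * w2) := by
  obtain ⟨N, C, hC1, hC2, hE, h1, h2⟩ := hy
  obtain ⟨N', C', hC1', hC2', hE', h1', h2'⟩ := hz
  refine ⟨N * N', C * C', by simp [hC1, hC1'], by simp [hC2, hC2'], ?_, ?_, ?_⟩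
  · rw [map_mul, map_mul]
    calc algebraMap MvP FF C * algebraMap MvP FF C' * (y * z)
        = (algebraMap MvP FF C * y) * (algebraMap MvP FF C' * z) := by ring
      _ = _ := by rw [hE, hE']
  · rw [map_mul, map_mul, h1, h1']
    ring
  · rw [map_mul, map_mul, h2, h2']
    ring

lemma good_neg {y v1 v2 : FF} (hy : Good u1 u2 y v1 v2) : Good u1 u2 (-y) (-v1) (-v2) := by
  obtain ⟨N, C, hC1, hC2, hE, h1, h2⟩ := hy
  exact ⟨-N, C, hC1, hC2, by rw [map_neg, ← hE]; ring, by rw [map_neg, h1]; ring,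
    by rw [map_neg, h2]; ring⟩

lemma good_sub {y v1 v2 z w1 w2 : FF} (hy : Good u1 u2 y v1 v2) (hz : Good u1 u2 z w1 w2) :
    Good u1 u2 (y - z) (v1 - w1) (v2 - w2) := by
  have := good_add u1 u2 hy (good_neg u1 u2 hz)
  simpa [sub_eq_add_neg] using this

lemma good_inv {y v1 v2 : FF} (hy : Good u1 u2 y v1 v2) (h1 : v1 ≠ 0) (h2 : v2 ≠ 0) :
    Good u1 u2 y⁻¹ v1⁻¹ v2⁻¹ := by
  obtain ⟨N, C, hC1, hC2, hE, hv1, hv2⟩ := hy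
  have hN1 : evH u1 N ≠ 0 := by rw [hv1]; exact mul_ne_zero h1 hC1
  have hN2 : evH u2 N ≠ 0 := by rw [hv2]; exact mul_ne_zero h2 hC2
  have hC0 : C ≠ 0 := fun h => hC1 (by rw [h, map_zero])
  have hCF : algebraMap MvP FF C ≠ 0 := fun h =>
    hC0 ((map_eq_zero_iff _ (IsFractionRing.injective MvP FF)).1 h)
  have hy0 : y ≠ 0 := by
    intro h0
    rw [h0, mul_zero] at hE
    exact hN1 (by rw [show N = 0 from
      (map_eq_zero_iff _ (IsFractionRing.injective MvP FF)).1 hE.symm, map_zero])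
  refine ⟨C, N, hN1, hN2, ?_, ?_, ?_⟩
  · rw [← hE]
    field_simp
  · rw [hv1]
    field_simp
  · rw [hv2]
    field_simp

lemma good_div {y v1 v2 z w1 w2 : FF} (hy : Good u1 u2 y v1 v2) (hz : Good u1 u2 z w1 w2)
    (h1 : w1 ≠ 0) (h2 : w2 ≠ 0) : Good u1 u2 (y / z) (v1 / w1) (v2 / w2) := by
  have := good_mul u1 u2 hy (good_inv u1 u2 hz h1 h2)
  simpa [div_eq_mul_inv] using this

lemma good_pow {y v1 v2 : FF} (hy : Good u1 u2 y v1 v2) (k : ℕ) :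
    Good u1 u2 (y ^ k) (v1 ^ k) (v2 ^ k) := by
  induction k with
  | zero => simpa using good_one u1 u2
  | succ k ih =>
    rw [pow_succ, pow_succ, pow_succ]
    exact good_mul u1 u2 ih hy

lemma good_zpow {y v1 v2 : FF} (hy : Good u1 u2 y v1 v2) (h1 : v1 ≠ 0) (h2 : v2 ≠ 0)
    (e : ℤ) : Good u1 u2 (y ^ e) (v1 ^ e) (v2 ^ e) := by
  cases e with
  | ofNat k =>
    rw [Int.ofNat_eq_coe, zpow_natCast, zpow_natCast, zpow_natCast]
    exact good_pow u1 u2 hy k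
  | negSucc k =>
    rw [zpow_negSucc, zpow_negSucc, zpow_negSucc]
    exact good_inv u1 u2 (good_pow u1 u2 hy (k+1)) (pow_ne_zero _ h1) (pow_ne_zero _ h2)

lemma good_sum {ι : Type*} (s : Finset ι) (f g1 g2 : ι → FF)
    (h : ∀ i ∈ s, Good u1 u2 (f i) (g1 i) (g2 i)) :
    Good u1 u2 (∑ i ∈ s, f i) (∑ i ∈ s, g1 i) (∑ i ∈ s, g2 i) := by
  classical
  revert h
  refine Finset.induction_on s ?_ ?_
  · intro _
    simpa using good_poly u1 u2 0
  · intro a s' hx ih h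
    rw [Finset.sum_insert hx, Finset.sum_insert hx, Finset.sum_insert hx]
    exact good_add u1 u2 (h a (Finset.mem_insert_self a s'))
      (ih fun i hi => h i (Finset.mem_insert_of_mem hi))

lemma good_prod {ι : Type*} (s : Finset ι) (f g1 g2 : ι → FF)
    (h : ∀ i ∈ s, Good u1 u2 (f i) (g1 i) (g2 i)) :
    Good u1 u2 (∏ i ∈ s, f i) (∏ i ∈ s, g1 i) (∏ i ∈ s, g2 i) := by
  classical
  revert h
  refine Finset.induction_on s ?_ ?_
  · intro _
    simpa using good_one u1 u2
  · intro a s' hx ih h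
    rw [Finset.prod_insert hx, Finset.prod_insert hx, Finset.prod_insert hx]
    exact good_mul u1 u2 (h a (Finset.mem_insert_self a s'))
      (ih fun i hi => h i (Finset.mem_insert_of_mem hi))

lemma good_av : Good u1 u2 av u1 u2 := by
  have := good_poly u1 u2 (MvPolynomial.X 0)
  simpa [av] using this

lemma good_qv : Good u1 u2 qv qv qv := by
  have := good_poly u1 u2 (MvPolynomial.X 1)
  simpa [qv] using this

end Good


-- swapped-pair version of the key identity
theorem keyIdentity' {K : Type*} [Field K] (X : K) (d h n m μ : ℕ) (r : ℤ)
    (hX0 : X ≠ 0) (hX1 : ∀ c : ℤ, X ^ c = 1 → c = 0)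
    (hdh : d = 2*h+1) (hh : 1 ≤ h)
    (hdm : (d:ℤ) * m = ((d:ℤ)-1) * n - r)
    (hdmu : (d:ℤ) * μ = (n:ℤ) + r - d)
    (hmL : 2*h*μ < m) (hmn : m < n)
    (hcop : IsCoprime (d:ℤ) (n:ℤ)) :
    ∑ k ∈ range n,
      ((∏ i ∈ Icc 1 h, pochK (X ^ (r + ((d:ℤ)+1-2*(i:ℤ))*(n:ℤ))) (X^d) k
          * pochK (X ^ (r - ((d:ℤ)+1-2*(i:ℤ))*(n:ℤ))) (X^d) k)
        * pochK (X ^ r) (X^d) k * (X^d) ^ k)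
      / ((∏ i ∈ Icc 1 h, pochK (X ^ ((d:ℤ) + ((d:ℤ)-2*(i:ℤ))*(n:ℤ))) (X^d) k
          * pochK (X ^ ((d:ℤ) - ((d:ℤ)-2*(i:ℤ))*(n:ℤ))) (X^d) k)
        * pochK (X^d) (X^d) k) = 0 := by
  have hkey := keyIdentity X d h n m μ r hX0 hX1 hdh hh hdm hdmu hmL hmn hcop
  rw [← hkey]
  refine Finset.sum_congr rfl fun k _ => ?_
  have e1 : (∏ i ∈ Icc 1 h, pochK (X ^ (r + ((d:ℤ)+1-2*(i:ℤ))*(n:ℤ))) (X^d) k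
          * pochK (X ^ (r - ((d:ℤ)+1-2*(i:ℤ))*(n:ℤ))) (X^d) k)
      = ∏ i ∈ Icc 1 h, pochK (X ^ (r - ((d:ℤ)+1-2*(i:ℤ))*(n:ℤ))) (X^d) k
          * pochK (X ^ (r + ((d:ℤ)+1-2*(i:ℤ))*(n:ℤ))) (X^d) k :=
    Finset.prod_congr rfl fun i _ => mul_comm _ _
  have e2 : (∏ i ∈ Icc 1 h, pochK (X ^ ((d:ℤ) + ((d:ℤ)-2*(i:ℤ))*(n:ℤ))) (X^d) k
          * pochK (X ^ ((d:ℤ) - ((d:ℤ)-2*(i:ℤ))*(n:ℤ))) (X^d) k)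
      = ∏ i ∈ Icc 1 h, pochK (X ^ ((d:ℤ) - ((d:ℤ)-2*(i:ℤ))*(n:ℤ))) (X^d) k
          * pochK (X ^ ((d:ℤ) + ((d:ℤ)-2*(i:ℤ))*(n:ℤ))) (X^d) k :=
    Finset.prod_congr rfl fun i _ => mul_comm _ _
  rw [e1, e2]

lemma qv_ne : qv ≠ 0 := fun h =>
  MvPolynomial.X_ne_zero 1 ((map_eq_zero_iff _ (IsFractionRing.injective MvP FF)).1 h)

lemma qv_pow_ne_one (t : ℕ) (ht : t ≠ 0) : qv ^ t ≠ 1 := by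
  intro h
  have h1 : algebraMap MvP FF (MvPolynomial.X 1 ^ t) = algebraMap MvP FF 1 := by
    rw [map_pow, map_one]; exact h
  have h2 : (MvPolynomial.X 1 ^ t : MvP) = 1 := (IsFractionRing.injective MvP FF) h1
  have h3 := congrArg (MvPolynomial.eval (fun _ : Fin 2 => (2:ℚ))) h2
  simp only [map_pow, MvPolynomial.eval_X, map_one] at h3
  have h4 : (1:ℚ) < 2 ^ t := one_lt_pow₀ (by norm_num) ht
  rw [h3] at h4
  exact lt_irrefl _ h4

lemma qv_zpow_eq_one (c : ℤ) (h : qv ^ c = 1) : c = 0 := by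
  rcases c with t | t
  · rw [Int.ofNat_eq_coe, zpow_natCast] at h
    have ht : t = 0 := by
      by_contra hc
      exact qv_pow_ne_one t hc h
    rw [ht]
    rfl
  · rw [zpow_negSucc, inv_eq_one] at h
    exact absurd h (qv_pow_ne_one (t+1) (Nat.succ_ne_zero t))

lemma good_poch (u1 u2 : FF) {x q' w1 w2 t1 t2 : FF} (hx : Good u1 u2 x w1 w2)
    (hq : Good u1 u2 q' t1 t2) (k : ℕ) :
    Good u1 u2 (poch x q' k) (pochK w1 t1 k) (pochK w2 t2 k) :=
  good_prod u1 u2 _ _ _ _ (fun j _ =>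
    good_sub u1 u2 (good_one u1 u2) (good_mul u1 u2 hx (good_pow u1 u2 hq j)))

lemma congrZero_of_good (n : ℕ) (hn : 0 < n) (A : FF)
    (hA : Good (qv ^ (-(n:ℤ))) (qv ^ (n:ℤ)) A 0 0) :
    CongrZero A ((1 - MvPolynomial.X 0 * MvPolynomial.X 1 ^ n)
      * (MvPolynomial.X 0 - MvPolynomial.X 1 ^ n)) := by
  classical
  obtain ⟨N, C, hC1, hC2, hE, hN1, hN2⟩ := hA
  rw [zero_mul] at hN1 hN2
  set P1 : MvP := 1 - MvPolynomial.X 0 * MvPolynomial.X 1 ^ n with hP1def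
  set P2 : MvP := MvPolynomial.X 0 - MvPolynomial.X 1 ^ n with hP2def
  have hqv0 : qv ≠ 0 := qv_ne
  have hprime1 : Prime P1 := prime_P1 n hn
  have hprime2 : Prime P2 := prime_P2 n hn
  -- evaluations of P1 P2
  have hev1P1 : evH (qv ^ (-(n:ℤ))) P1 = 0 := by
    rw [hP1def, map_sub, map_one, map_mul, map_pow, evH_X0, evH_X1]
    rw [← zpow_natCast qv n, ← zpow_add₀ hqv0]
    simp
  have hev2P2 : evH (qv ^ ((n:ℤ))) P2 = 0 := by
    rw [hP2def, map_sub, map_pow, evH_X0, evH_X1, zpow_natCast, sub_self]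
  have hev2P1 : evH (qv ^ ((n:ℤ))) P1 ≠ 0 := by
    rw [hP1def, map_sub, map_one, map_mul, map_pow, evH_X0, evH_X1]
    rw [← zpow_natCast qv n, ← zpow_add₀ hqv0]
    intro h
    have h2 : qv ^ ((n:ℤ) + (n:ℤ)) = 1 := by
      have := sub_eq_zero.1 h
      exact this.symm
    have := qv_zpow_eq_one _ h2
    omega
  -- P1 P2 divide N
  have hdvd1 : P1 ∣ N := dvd_P1_of_ev n N hN1 hqv0
  have hdvd2 : P2 ∣ N := dvd_P2_of_ev n N hN2
  obtain ⟨B1, hB1⟩ := hdvd1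
  have hP2B1 : P2 ∣ P1 * B1 := hB1 ▸ hdvd2
  have hP2notP1 : ¬ P2 ∣ P1 := by
    intro ⟨w, hw⟩
    apply hev2P1
    rw [hw, map_mul, hev2P2, zero_mul]
  obtain ⟨B, hB⟩ : P2 ∣ B1 := (hprime2.2.2 _ _ hP2B1).resolve_left hP2notP1
  have hNfact : N = P1 * P2 * B := by rw [hB1, hB]; ring
  -- assemble
  have hC0 : C ≠ 0 := fun h => hC1 (by rw [h, map_zero])
  have hCF : algebraMap MvP FF C ≠ 0 := fun h =>
    hC0 ((map_eq_zero_iff _ (IsFractionRing.injective MvP FF)).1 h)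
  refine ⟨B, C, hC0, ?_, ?_⟩
  · -- IsRelPrime C (P1 * P2)
    intro w hwC hwP
    by_contra hunit
    have hw0 : w ≠ 0 := by
      intro h0
      rw [h0] at hwC
      exact hC0 (zero_dvd_iff.1 hwC)
    obtain ⟨p, hpirr, hpw⟩ := WfDvdMonoid.exists_irreducible_factor hunit hw0
    have hpprime : Prime p := UniqueFactorizationMonoid.irreducible_iff_prime.1 hpirr
    have hpP : p ∣ P1 * P2 := hpw.trans hwP
    have hpC : p ∣ C := hpw.trans hwC
    rcases hpprime.2.2 _ _ hpP with hp1 | hp2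
    · have hassoc := hpprime.associated_of_dvd hprime1 hp1
      have : P1 ∣ C := hassoc.symm.dvd.trans hpC
      obtain ⟨w', hw'⟩ := this
      apply hC1
      rw [hw', map_mul, hev1P1, zero_mul]
    · have hassoc := hpprime.associated_of_dvd hprime2 hp2
      have : P2 ∣ C := hassoc.symm.dvd.trans hpC
      obtain ⟨w', hw'⟩ := this
      apply hC2
      rw [hw', map_mul, hev2P2, zero_mul]
  · -- the equation
    have hAeq : A = algebraMap MvP FF N / algebraMap MvP FF C := by
      rw [eq_div_iff hCF, mul_comm, hE]
    rw [hAeq, hNfact, map_mul, map_mul]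
    rw [mul_div_assoc]

theorem stmt8 (d : ℕ) (hd : 3 ≤ d) (hodd : Odd d) (r : ℤ) (hr : r ≤ (d : ℤ) - 2)
    (hgcd : Int.gcd r d = 1) (n : ℕ) (hn : 0 < n)
    (hmod : (n : ℤ) ≡ -r [ZMOD (d : ℤ)]) (hge : (d : ℤ) - r ≤ (n : ℤ)) :
    CongrZero
      (∑ k ∈ Finset.range n,
        ((∏ i ∈ Finset.Icc 1 ((d - 1) / 2),
            poch (av ^ ((d : ℤ) + 1 - 2 * (i : ℤ)) * qv ^ r) (qv ^ d) k
              * poch (av ^ (2 * (i : ℤ) - (d : ℤ) - 1) * qv ^ r) (qv ^ d) k)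
          * poch (qv ^ r) (qv ^ d) k * qv ^ (d * k))
        / ((∏ i ∈ Finset.Icc 1 ((d - 1) / 2),
            poch (av ^ ((d : ℤ) - 2 * (i : ℤ)) * qv ^ (d : ℤ)) (qv ^ d) k
              * poch (av ^ (2 * (i : ℤ) - (d : ℤ)) * qv ^ (d : ℤ)) (qv ^ d) k)
          * poch (qv ^ d) (qv ^ d) k))
      ((1 - MvPolynomial.X 0 * MvPolynomial.X 1 ^ n)
        * (MvPolynomial.X 0 - MvPolynomial.X 1 ^ n)) := by
  classical
  set h : ℕ := (d - 1) / 2 with hhdef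
  obtain ⟨w, hw⟩ := hodd
  have hdh : d = 2*h + 1 := by omega
  have hh1 : 1 ≤ h := by omega
  have hd3 : 3 ≤ d := hd
  have hdzpos : (0:ℤ) < (d:ℤ) := by exact_mod_cast (by omega : 0 < d)
  have hd3z : (3:ℤ) ≤ (d:ℤ) := by exact_mod_cast hd3
  have hn1 : (1:ℤ) ≤ (n:ℤ) := by exact_mod_cast hn
  obtain ⟨t, ht⟩ : ((d:ℤ)) ∣ (-r) - (n:ℤ) := Int.ModEq.dvd hmod
  have hdnt : (d:ℤ)*((n:ℤ)+t) = ((d:ℤ)-1)*(n:ℤ) - r := by linear_combination -ht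
  have hpos1 : (0:ℤ) < ((d:ℤ)-1)*(n:ℤ) - r := by nlinarith
  have hmpos : (0:ℤ) ≤ (n:ℤ) + t := by nlinarith
  set m : ℕ := ((n:ℤ)+t).toNat with hmdef
  have hmz : ((m:ℕ):ℤ) = (n:ℤ) + t := Int.toNat_of_nonneg hmpos
  have hdμt : (d:ℤ)*(-(t+1)) = (n:ℤ) + r - (d:ℤ) := by linear_combination ht
  have hμpos : (0:ℤ) ≤ -(t+1) := by nlinarith [hge]
  set μ : ℕ := (-(t+1)).toNat with hμdef
  have hμz : ((μ:ℕ):ℤ) = -(t+1) := Int.toNat_of_nonneg hμpos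
  have hdm : (d:ℤ) * (m:ℤ) = ((d:ℤ)-1) * (n:ℤ) - r := by rw [hmz]; linear_combination -ht
  have hdμ : (d:ℤ) * (μ:ℤ) = (n:ℤ) + r - (d:ℤ) := by rw [hμz]; linear_combination ht
  have hcop : IsCoprime ((d:ℕ):ℤ) ((n:ℕ):ℤ) := by
    have hrd : IsCoprime (r:ℤ) ((d:ℕ):ℤ) := Int.isCoprime_iff_gcd_eq_one.2 hgcd
    have h1 : IsCoprime ((d:ℕ):ℤ) (-r) := hrd.symm.neg_right
    have h2 := h1.add_mul_left_right (-t)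
    rwa [show -r + ((d:ℕ):ℤ)*(-t) = ((n:ℕ):ℤ) from by linear_combination ht] at h2
  have hmn : m < n := by
    have hz : ((m:ℕ):ℤ) < ((n:ℕ):ℤ) := by nlinarith [hdm, hge]
    exact_mod_cast hz
  have hmL : 2*h*μ < m := by
    have hkey : ((m:ℕ):ℤ) = ((d:ℤ)-1)*(μ:ℤ) + ((d:ℤ)-1-r) := by
      have hd0 : (d:ℤ) ≠ 0 := by omega
      apply mul_left_cancel₀ hd0
      rw [hdm]
      linear_combination -((d:ℤ)-1)*hdμ
    have hcast : ((2*h*μ : ℕ):ℤ) = ((d:ℤ)-1)*(μ:ℤ) := by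
      push_cast
      have : (d:ℤ) = 2*(h:ℤ)+1 := by exact_mod_cast hdh
      rw [this]
      ring
    have hz : ((2*h*μ : ℕ):ℤ) < ((m:ℕ):ℤ) := by
      rw [hcast, hkey]
      linarith [hr]
    exact_mod_cast hz
  -- nonvanishing infrastructure over FF
  have hqv0 : qv ≠ 0 := qv_ne
  have hzpF : ∀ c : ℤ, c ≠ 0 → (1:FF) - qv ^ c ≠ 0 := by
    intro c hc hEq
    exact hc (qv_zpow_eq_one c (sub_eq_zero.1 hEq).symm)
  have hXQF : ∀ (c : ℤ) (j : ℕ), qv ^ c * (qv^d) ^ j = qv ^ (c + (d:ℤ) * j) := by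
    intro c j
    have hc : ((d*j:ℕ):ℤ) = (d:ℤ)*(j:ℤ) := by push_cast; ring
    rw [← pow_mul, ← zpow_natCast qv (d*j), hc, ← zpow_add₀ hqv0]
  have hdvdF : ∀ a : ℤ, 1 ≤ a → a ≤ (d:ℤ) - 2 → ¬ ((d:ℤ) ∣ a * (n:ℤ)) := by
    intro a h1 h2 hdv
    have h3 := hcop.dvd_of_dvd_mul_right hdv
    have h4 := Int.le_of_dvd (by linarith) h3
    linarith
  have hexpF : ∀ (a ε : ℤ) (j : ℕ), 1 ≤ a → a ≤ (d:ℤ) - 2 → (ε = 1 ∨ ε = -1) →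
      (d:ℤ) + ε * (a * (n:ℤ)) + (d:ℤ) * j ≠ 0 := by
    intro a ε j h1 h2 hε hEq
    rcases hε with hh | hh <;> subst hh
    · exact hdvdF a h1 h2 ⟨-(1 + j), by linear_combination hEq⟩
    · exact hdvdF a h1 h2 ⟨1 + j, by linear_combination -hEq⟩
  have hpcF : ∀ {c c' : ℤ}, c = c' → ∀ k, pochK (qv ^ c) (qv^d) k = pochK (qv ^ c') (qv^d) k :=
    fun hcc k => by rw [hcc]
  have hpochF : ∀ (a ε : ℤ), 1 ≤ a → a ≤ (d:ℤ)-2 → (ε = 1 ∨ ε = -1) → ∀ k,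
      pochK (qv ^ ((d:ℤ) + ε*(a*(n:ℤ)))) (qv^d) k ≠ 0 := by
    intro a ε h1 h2 hε k
    refine Finset.prod_ne_zero_iff.2 fun j _ => ?_
    rw [hXQF]
    exact hzpF _ (hexpF a ε j h1 h2 hε)
  have hQ1F : ∀ t' : ℕ, t' ≠ 0 → (qv^d) ^ t' ≠ 1 := by
    intro t' ht' hEq
    have h1 : qv ^ ((d*t' : ℕ) : ℤ) = 1 := by
      rw [zpow_natCast, pow_mul]; exact hEq
    have h2 := qv_zpow_eq_one _ h1
    have : d * t' ≠ 0 := by positivity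
    omega
  have hQQF : ∀ k, pochK (qv^d) (qv^d) k ≠ 0 := pochQQ_ne _ hQ1F
  -- the two evaluation points
  have hu1 : (qv : FF) ^ (-(n:ℤ)) ≠ 0 := zpow_ne_zero _ hqv0
  have hu2 : (qv : FF) ^ ((n:ℤ)) ≠ 0 := zpow_ne_zero _ hqv0
  have hQvG : Good (qv ^ (-(n:ℤ))) (qv ^ ((n:ℤ))) (qv^d) (qv^d) (qv^d) :=
    good_pow _ _ (good_qv _ _) d
  have hleaf : ∀ (e s c1 c2 : ℤ), c1 = s - e*(n:ℤ) → c2 = s + e*(n:ℤ) →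
      Good (qv ^ (-(n:ℤ))) (qv ^ ((n:ℤ))) (av ^ e * qv ^ s) (qv ^ c1) (qv ^ c2) := by
    intro e s c1 c2 h1 h2
    have hg := good_mul (qv ^ (-(n:ℤ))) (qv ^ ((n:ℤ)))
      (good_zpow _ _ (good_av _ _) hu1 hu2 e)
      (good_zpow _ _ (good_qv _ _) hqv0 hqv0 s)
    refine good_congr _ _ hg ?_ ?_
    · rw [← zpow_mul, ← zpow_add₀ hqv0]
      congr 1
      rw [h1]; ring
    · rw [← zpow_mul, ← zpow_add₀ hqv0]
      congr 1
      rw [h2]; ring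
  apply congrZero_of_good n hn
  refine good_congr _ _ ?_
    (keyIdentity qv d h n m μ r hqv0 qv_zpow_eq_one hdh hh1 hdm hdμ hmL hmn hcop)
    (keyIdentity' qv d h n m μ r hqv0 qv_zpow_eq_one hdh hh1 hdm hdμ hmL hmn hcop)
  refine good_sum _ _ (Finset.range n) _ _ _ ?_
  intro k _
  refine good_div _ _ ?_ ?_ ?_ ?_
  · -- numerator
    refine good_mul _ _ (good_mul _ _ ?_ ?_) ?_
    · refine good_prod _ _ _ _ _ _ ?_
      intro i _
      exact good_mul _ _
        (good_poch _ _ (hleaf ((d:ℤ)+1-2*(i:ℤ)) r _ _ (by ring) (by ring)) hQvG k)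
        (good_poch _ _ (hleaf (2*(i:ℤ)-(d:ℤ)-1) r _ _ (by ring) (by ring)) hQvG k)
    · exact good_poch _ _ (good_zpow _ _ (good_qv _ _) hqv0 hqv0 r) hQvG k
    · exact good_congr _ _ (good_pow _ _ (good_qv _ _) (d*k)) (pow_mul qv d k) (pow_mul qv d k)
  · -- denominator
    refine good_mul _ _ ?_ ?_
    · refine good_prod _ _ _ _ _ _ ?_
      intro i _
      exact good_mul _ _
        (good_poch _ _ (hleaf ((d:ℤ)-2*(i:ℤ)) ((d:ℤ)) _ _ (by ring) (by ring)) hQvG k)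
        (good_poch _ _ (hleaf (2*(i:ℤ)-(d:ℤ)) ((d:ℤ)) _ _ (by ring) (by ring)) hQvG k)
    · exact good_poch _ _ hQvG hQvG k
  · -- first denominator value nonzero
    refine mul_ne_zero (Finset.prod_ne_zero_iff.2 fun i hi => ?_) (hQQF k)
    obtain ⟨hi1, hi2⟩ := Finset.mem_Icc.1 hi
    refine mul_ne_zero ?_ ?_
    · rw [hpcF (show (d:ℤ) - ((d:ℤ)-2*(i:ℤ))*(n:ℤ)
        = (d:ℤ) + (-1)*(((d:ℤ)-2*(i:ℤ))*(n:ℤ)) from by ring) k]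
      exact hpochF _ _ (by omega) (by omega) (Or.inr rfl) k
    · rw [hpcF (show (d:ℤ) + ((d:ℤ)-2*(i:ℤ))*(n:ℤ)
        = (d:ℤ) + 1*(((d:ℤ)-2*(i:ℤ))*(n:ℤ)) from by ring) k]
      exact hpochF _ _ (by omega) (by omega) (Or.inl rfl) k
  · -- second denominator value nonzero
    refine mul_ne_zero (Finset.prod_ne_zero_iff.2 fun i hi => ?_) (hQQF k)
    obtain ⟨hi1, hi2⟩ := Finset.mem_Icc.1 hi
    refine mul_ne_zero ?_ ?_
    · rw [hpcF (show (d:ℤ) + ((d:ℤ)-2*(i:ℤ))*(n:ℤ)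
        = (d:ℤ) + 1*(((d:ℤ)-2*(i:ℤ))*(n:ℤ)) from by ring) k]
      exact hpochF _ _ (by omega) (by omega) (Or.inl rfl) k
    · rw [hpcF (show (d:ℤ) - ((d:ℤ)-2*(i:ℤ))*(n:ℤ)
        = (d:ℤ) + (-1)*(((d:ℤ)-2*(i:ℤ))*(n:ℤ)) from by ring) k]
      exact hpochF _ _ (by omega) (by omega) (Or.inr rfl) k
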